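/- Let R be a d×d real symmetric positive semidefinite matrix with eigendecomposition R = V Λ Vᵀ, where V is orthogonal and Λ = diag(λ_1, …, λ_d) with λ_1 ≥ … ≥ λ_d ≥ 0 and λ_1 > λ_d. Let κ_max satisfy 1 < κ_max and λ_1 − λ_d·κ_max > 0. Set δ = (λ_1 − λ_d·κ_max)/(κ_max − 1), T = λ_1/κ_max, Γ(k,k) = max(T − λ_k, 0), R_RR = R + δI and R_ME = V(Λ + Γ)Vᵀ. Then for every index i, the reconditioned standard deviations satisfy √(R_ME(i,i)) < √(R_RR(i,i)); that is, for the same target condition number, the minimum eigenvalue method increases every standard deviation strictly less than the ridge regression method. -/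

import Mathlib

open Matrix BigOperators

/-- for the same target condition number `κ_max`, the minimum eigenvalue
method increases every standard deviation strictly less than ridge regression:
`√R_ME(i,i) < √R_RR(i,i)` for every index `i`. -/
theorem minimum_eigenvalue_std_less_than_ridge_regression_std
    {d : ℕ} (R V : Matrix (Fin (d + 1)) (Fin (d + 1)) ℝ)
    (lam : Fin (d + 1) → ℝ) (κmax δ T : ℝ)
    (hV1 : V * Vᵀ = 1) (hV2 : Vᵀ * V = 1)
    (hdec : Antitone lam) (hnn : 0 ≤ lam (Fin.last d))
    (hgt : lam (Fin.last d) < lam 0)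
    (hR : R = V * Matrix.diagonal lam * Vᵀ)
    (hκ : 1 < κmax) (hnum : 0 < lam 0 - lam (Fin.last d) * κmax)
    (hδ : δ = (lam 0 - lam (Fin.last d) * κmax) / (κmax - 1))
    (hT : T = lam 0 / κmax)
    (RRR RME : Matrix (Fin (d + 1)) (Fin (d + 1)) ℝ)
    (hRRR : RRR = R + δ • (1 : Matrix (Fin (d + 1)) (Fin (d + 1)) ℝ))
    (hRME : RME = V * (Matrix.diagonal lam
        + Matrix.diagonal fun k => max (T - lam k) 0) * Vᵀ) :
    ∀ i, Real.sqrt (RME i i) < Real.sqrt (RRR i i) := by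
  intro i
  set γ : Fin (d + 1) → ℝ := fun k => max (T - lam k) 0 with hγ
  have hκ0 : (0:ℝ) < κmax := lt_trans one_pos hκ
  have hκ1 : (0:ℝ) < κmax - 1 := by linarith
  have hTld : lam (Fin.last d) < T := by
    rw [hT, lt_div_iff₀ hκ0]; nlinarith
  have hTδ : T - lam (Fin.last d) < δ := by
    rw [hT, hδ, div_sub' (ne_of_gt hκ0), div_lt_div_iff₀ hκ0 hκ1]
    nlinarith
  have hγle : ∀ k, γ k ≤ T - lam (Fin.last d) := by
    intro k
    have hk : lam (Fin.last d) ≤ lam k := hdec (Fin.le_last k)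
    exact max_le (by linarith) (by linarith)
  set c : ℝ := δ - (T - lam (Fin.last d)) with hc
  have hcpos : 0 < c := by simp only [hc]; linarith
  have hsumsq : ∑ k, V i k * V i k = 1 := by
    have := congrFun (congrFun hV1 i) i
    simpa [Matrix.mul_apply, Matrix.one_apply, Matrix.transpose_apply] using this
  have hentry : ∀ f : Fin (d+1) → ℝ,
      (V * Matrix.diagonal f * Vᵀ) i i = ∑ k, (V i k * V i k) * f k := by
    intro f
    rw [Matrix.mul_apply]
    simp only [Matrix.mul_diagonal, Matrix.transpose_apply]
    exact Finset.sum_congr rfl fun k _ => by ring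
  have hRMEd : RME i i = ∑ k, (V i k * V i k) * (lam k + γ k) := by
    rw [hRME, Matrix.diagonal_add, hentry]
  have hRRRd : RRR i i = (∑ k, (V i k * V i k) * lam k) + δ := by
    rw [hRRR, hR]
    simp [Matrix.add_apply, hentry, Matrix.smul_apply, Matrix.one_apply]
  have e1 : ∑ k, (V i k * V i k) * (lam k + γ k + c)
      = (∑ k, (V i k * V i k) * (lam k + γ k)) + c := by
    calc ∑ k, (V i k * V i k) * (lam k + γ k + c)
        = ∑ k, ((V i k * V i k) * (lam k + γ k) + (V i k * V i k) * c) :=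
          Finset.sum_congr rfl fun k _ => by ring
      _ = (∑ k, (V i k * V i k) * (lam k + γ k)) + ∑ k, (V i k * V i k) * c :=
          Finset.sum_add_distrib
      _ = (∑ k, (V i k * V i k) * (lam k + γ k)) + (∑ k, V i k * V i k) * c := by
          rw [Finset.sum_mul]
      _ = _ := by rw [hsumsq]; ring
  have e2 : ∑ k, (V i k * V i k) * (lam k + δ)
      = (∑ k, (V i k * V i k) * lam k) + δ := by
    calc ∑ k, (V i k * V i k) * (lam k + δ)
        = ∑ k, ((V i k * V i k) * lam k + (V i k * V i k) * δ) :=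
          Finset.sum_congr rfl fun k _ => by ring
      _ = (∑ k, (V i k * V i k) * lam k) + ∑ k, (V i k * V i k) * δ :=
          Finset.sum_add_distrib
      _ = (∑ k, (V i k * V i k) * lam k) + (∑ k, V i k * V i k) * δ := by
          rw [Finset.sum_mul]
      _ = _ := by rw [hsumsq]; ring
  have hlt : RME i i < RRR i i := by
    have hle : RME i i + c ≤ RRR i i := by
      rw [hRMEd, hRRRd, ← e1, ← e2]
      apply Finset.sum_le_sum
      intro k _
      apply mul_le_mul_of_nonneg_left _ (mul_self_nonneg _)
      have := hγle k
      simp only [hc]; linarith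
    linarith
  have hRMEnn : 0 ≤ RME i i := by
    rw [hRMEd]
    apply Finset.sum_nonneg
    intro k _
    apply mul_nonneg (mul_self_nonneg _)
    have hk : lam (Fin.last d) ≤ lam k := hdec (Fin.le_last k)
    have : 0 ≤ γ k := le_max_right _ _
    linarith
  exact Real.sqrt_lt_sqrt hRMEnn hlt
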